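/- In the minority game with 2k+1 players, for each t ∈ {0,...,k}, the profile in which t players choose -1, t players choose +1, and the remaining 2k+1-2t players each mix with probability 1/2 is a Nash equilibrium. -/

import Mathlib

open Finset

/-- Payoff in the minority game: player `i` gets `f n` where `n` is the number of
players (including `i`) choosing the same action as `i`.
The action `true` represents `-1`, `false` represents `+1`. -/
def mgPayoff (f : ℕ → ℝ) {N : ℕ} (a : Fin N → Bool) (i : Fin N) : ℝ :=
  f ((Finset.univ.filter fun j => a j = a i).card)

/-- Pure Nash equilibrium of the minority game. -/
def mgPureNE (f : ℕ → ℝ) {N : ℕ} (a : Fin N → Bool) : Prop :=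
  ∀ i : Fin N, mgPayoff f (Function.update a i (!(a i))) i ≤ mgPayoff f a i

/-- Probability of the pure profile `a` under the mixed profile `σ`, where
`σ j` is the probability that player `j` chooses `-1` (i.e. `true`). -/
noncomputable def mgProb {N : ℕ} (σ : Fin N → ℝ) (a : Fin N → Bool) : ℝ :=
  ∏ j, if a j then σ j else 1 - σ j

/-- Expected payoff of player `i` under the mixed profile `σ`. -/
noncomputable def mgEPay (f : ℕ → ℝ) {N : ℕ} (σ : Fin N → ℝ) (i : Fin N) : ℝ :=
  ∑ a : Fin N → Bool, mgProb σ a * f ((Finset.univ.filter fun j => a j = a i).card)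

/-- Mixed Nash equilibrium of the minority game: all probabilities lie in [0,1]
and no player can strictly improve by a unilateral deviation. -/
noncomputable def mgMixedNE (f : ℕ → ℝ) {N : ℕ} (σ : Fin N → ℝ) : Prop :=
  (∀ i, 0 ≤ σ i ∧ σ i ≤ 1) ∧
    ∀ (i : Fin N) (τ : ℝ), 0 ≤ τ → τ ≤ 1 →
      mgEPay f (Function.update σ i τ) i ≤ mgEPay f σ i


namespace Stmt12Aux

variable {N : ℕ}

/-- flip player `i` and all mixers -/
noncomputable def kap (σ : Fin N → ℝ) (i : Fin N) (a : Fin N → Bool) : Fin N → Bool :=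
  fun j => if j = i ∨ σ j = 1/2 then !(a j) else a j

/-- product of probabilities of the other players -/
noncomputable def w (σ : Fin N → ℝ) (i : Fin N) (a : Fin N → Bool) : ℝ :=
  ∏ j ∈ univ.erase i, (if a j then σ j else 1 - σ j)

def cnt (i : Fin N) (a : Fin N → Bool) : ℕ :=
  (univ.filter fun j => a j = a i).card

lemma kap_invol (σ : Fin N → ℝ) (i : Fin N) : Function.Involutive (kap σ i) := by
  intro a; funext j; unfold kap
  by_cases h : j = i ∨ σ j = 1/2
  · rw [if_pos h, if_pos h, Bool.not_not]
  · rw [if_neg h, if_neg h]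

lemma kap_apply_self (σ : Fin N → ℝ) (i : Fin N) (a : Fin N → Bool) :
    kap σ i a i = !(a i) := by unfold kap; rw [if_pos (Or.inl rfl)]

lemma w_kap (σ : Fin N → ℝ) (i : Fin N) (a : Fin N → Bool) :
    w σ i (kap σ i a) = w σ i a := by
  unfold w
  refine Finset.prod_congr rfl fun j hj => ?_
  rcases Finset.mem_erase.mp hj with ⟨hji, -⟩
  by_cases h : σ j = 1/2
  · have hk : kap σ i a j = !(a j) := by unfold kap; rw [if_pos (Or.inr h)]
    rw [hk]
    cases a j <;> simp only [Bool.not_true, Bool.not_false, if_true, if_false] <;>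
      rw [h] <;> norm_num
  · have hk : kap σ i a j = a j := by
      unfold kap; rw [if_neg (by tauto)]
    rw [hk]

lemma w_nonneg (σ : Fin N → ℝ) (hσ : ∀ j, σ j = 1 ∨ σ j = 0 ∨ σ j = 1/2)
    (i : Fin N) (a : Fin N → Bool) : 0 ≤ w σ i a := by
  refine Finset.prod_nonneg fun j _ => ?_
  rcases hσ j with h | h | h <;> cases a j <;> simp [h] <;> norm_num

lemma cnt_pos (i : Fin N) (a : Fin N → Bool) : 1 ≤ cnt i a := by
  have : i ∈ univ.filter fun j => a j = a i := by simp
  exact Finset.card_pos.mpr ⟨i, this⟩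

lemma cnt_le (i : Fin N) (a : Fin N → Bool) : cnt i a ≤ N := by
  simpa [cnt] using Finset.card_filter_le univ (fun j => a j = a i)


lemma card_or (P P' Q : Fin N → Prop) [DecidablePred P] [DecidablePred P'] [DecidablePred Q] :
    (univ.filter fun j => (Q j ∧ P j) ∨ (¬Q j ∧ P' j)).card
      = (univ.filter fun j => Q j ∧ P j).card + (univ.filter fun j => ¬Q j ∧ P' j).card := by
  rw [filter_or, card_union_of_disjoint]
  rw [disjoint_left]
  intro x hx hx'
  simp only [mem_filter] at hx hx'
  tauto

lemma card_filter_split (P Q : Fin N → Prop) [DecidablePred P] [DecidablePred Q] :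
    (univ.filter P).card
      = (univ.filter fun j => Q j ∧ P j).card + (univ.filter fun j => ¬Q j ∧ P j).card := by
  rw [← card_or P P Q]
  congr 1
  apply filter_congr
  intro j _
  constructor
  · intro h; by_cases hq : Q j <;> tauto
  · rintro (⟨-, h⟩ | ⟨-, h⟩) <;> exact h

lemma filter_nonmix (σ : Fin N → ℝ) (hσ : ∀ j, σ j = 1 ∨ σ j = 0 ∨ σ j = 1/2)
    (i : Fin N) (a : Fin N → Bool)
    (hsupp : ∀ j, j ≠ i → (σ j = 1 → a j = true) ∧ (σ j = 0 → a j = false)) (b : Bool) :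
    (univ.filter fun j => ¬(j = i ∨ σ j = 1/2) ∧ a j = b)
      = (univ.filter fun j => σ j = (if b then 1 else 0)).erase i := by
  ext j
  simp only [mem_filter, mem_univ, true_and, mem_erase, not_or]
  constructor
  · rintro ⟨⟨hji, hjm⟩, hja⟩
    refine ⟨hji, ?_⟩
    rcases hσ j with h | h | h
    · cases b
      · rw [(hsupp j hji).1 h] at hja; exact absurd hja (by simp)
      · simpa using h
    · cases b
      · simpa using h
      · rw [(hsupp j hji).2 h] at hja; exact absurd hja (by simp)
    · exact absurd h hjm
  · rintro ⟨hji, hj1⟩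
    have hne : σ j ≠ 1/2 := by
      cases b <;> simp only [Bool.false_eq_true, if_true, if_false] at hj1 <;> rw [hj1] <;> norm_num
    refine ⟨⟨hji, hne⟩, ?_⟩
    cases b
    · exact (hsupp j hji).2 (by simpa using hj1)
    · exact (hsupp j hji).1 (by simpa using hj1)


lemma cnt_kap (σ : Fin N → ℝ) (hσ : ∀ j, σ j = 1 ∨ σ j = 0 ∨ σ j = 1/2)
    (i : Fin N) (a : Fin N → Bool)
    (hsupp : ∀ j, j ≠ i → (σ j = 1 → a j = true) ∧ (σ j = 0 → a j = false)) :
    (cnt i (kap σ i a) : ℤ) = cnt i a + (if a i then 1 else -1) *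
      ((((univ.filter fun j => σ j = 0).erase i).card : ℤ)
        - (((univ.filter fun j => σ j = 1).erase i).card : ℤ)) := by
  have hrw : cnt i (kap σ i a)
      = (univ.filter fun j => ((j = i ∨ σ j = 1/2) ∧ a j = a i)
          ∨ (¬(j = i ∨ σ j = 1/2) ∧ ¬(a j = a i))).card := by
    unfold cnt
    congr 1
    apply filter_congr
    intro j _
    rw [kap_apply_self]
    unfold kap
    by_cases h : j = i ∨ σ j = 1/2
    · have hnot : ((!a j) = (!a i)) ↔ (a j = a i) := by
        cases a j <;> cases a i <;> simp
      rw [if_pos h, hnot]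
      tauto
    · have hnot : (a j = !a i) ↔ ¬(a j = a i) := by
        cases a j <;> cases a i <;> simp
      rw [if_neg h, hnot]
      tauto
  have hT : (univ.filter fun j => ¬(j = i ∨ σ j = 1/2) ∧ a j = true)
      = (univ.filter fun j => σ j = 1).erase i := by
    simpa using filter_nonmix σ hσ i a hsupp true
  have hF : (univ.filter fun j => ¬(j = i ∨ σ j = 1/2) ∧ a j = false)
      = (univ.filter fun j => σ j = 0).erase i := by
    simpa using filter_nonmix σ hσ i a hsupp false
  have hnt : ∀ j, (¬(a j = true)) ↔ (a j = false) := fun j => by cases a j <;> simp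
  have hnf : ∀ j, (¬(a j = false)) ↔ (a j = true) := fun j => by cases a j <;> simp
  rw [hrw, card_or]
  rw [show (cnt i a)
      = (univ.filter fun j => (j = i ∨ σ j = 1/2) ∧ a j = a i).card
        + (univ.filter fun j => ¬(j = i ∨ σ j = 1/2) ∧ a j = a i).card from
    card_filter_split (fun j => a j = a i) (fun j => j = i ∨ σ j = 1/2)]
  cases hai : a i
  · rw [show (univ.filter fun j => ¬(j = i ∨ σ j = 1/2) ∧ ¬(a j = false))
        = (univ.filter fun j => σ j = 1).erase i from by
      rw [← hT]; apply filter_congr; intro j _; rw [hnf j]]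
    rw [show (univ.filter fun j => ¬(j = i ∨ σ j = 1/2) ∧ a j = false)
        = (univ.filter fun j => σ j = 0).erase i from hF]
    simp only [Bool.false_eq_true, if_false]
    push_cast
    ring
  · rw [show (univ.filter fun j => ¬(j = i ∨ σ j = 1/2) ∧ ¬(a j = true))
        = (univ.filter fun j => σ j = 0).erase i from by
      rw [← hF]; apply filter_congr; intro j _; rw [hnt j]]
    rw [show (univ.filter fun j => ¬(j = i ∨ σ j = 1/2) ∧ a j = true)
        = (univ.filter fun j => σ j = 1).erase i from hT]
    simp only [if_true]
    push_cast
    ring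


lemma w_eq_zero (σ : Fin N → ℝ) (i : Fin N) (a : Fin N → Bool) (j : Fin N) (hji : j ≠ i)
    (h : (σ j = 1 ∧ a j = false) ∨ (σ j = 0 ∧ a j = true)) : w σ i a = 0 := by
  apply Finset.prod_eq_zero (Finset.mem_erase.mpr ⟨hji, mem_univ j⟩)
  rcases h with ⟨hs, ha⟩ | ⟨hs, ha⟩
  · simp only [ha, Bool.false_eq_true, if_false, hs, sub_self]
  · simp only [ha, if_true, hs]

noncomputable def Dsum (f : ℕ → ℝ) (σ : Fin N → ℝ) (i : Fin N) : ℝ :=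
  ∑ a : Fin N → Bool, w σ i a * (if a i then (1:ℝ) else -1) * f (cnt i a)

lemma neg_Dsum (f : ℕ → ℝ) (σ : Fin N → ℝ) (i : Fin N) :
    Dsum f σ i = -∑ a : Fin N → Bool,
      w σ i a * (if a i then (1:ℝ) else -1) * f (cnt i (kap σ i a)) := by
  have hre := Equiv.sum_comp (Function.Involutive.toPerm _ (kap_invol σ i))
    (fun a => w σ i a * (if a i then (1:ℝ) else -1) * f (cnt i a))
  rw [Dsum, ← hre, ← Finset.sum_neg_distrib]
  apply Finset.sum_congr rfl
  intro a _
  simp only [Function.Involutive.coe_toPerm]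
  have hb : (if kap σ i a i = true then (1:ℝ) else -1) = -(if a i = true then (1:ℝ) else -1) := by
    rw [kap_apply_self]; cases a i <;> norm_num
  rw [w_kap]
  simp only [kap_apply_self]
  cases a i <;> simp <;> ring

lemma two_Dsum (f : ℕ → ℝ) (σ : Fin N → ℝ) (i : Fin N) :
    2 * Dsum f σ i = ∑ a : Fin N → Bool,
      w σ i a * (if a i then (1:ℝ) else -1) * (f (cnt i a) - f (cnt i (kap σ i a))) := by
  rw [two_mul]
  nth_rewrite 2 [neg_Dsum f σ i]
  rw [Dsum]
  rw [show (∑ a : Fin N → Bool,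
        w σ i a * (if a i then (1:ℝ) else -1) * (f (cnt i a) - f (cnt i (kap σ i a))))
      = ∑ a : Fin N → Bool, (w σ i a * (if a i then (1:ℝ) else -1) * f (cnt i a)
          - w σ i a * (if a i then (1:ℝ) else -1) * f (cnt i (kap σ i a))) from
    Finset.sum_congr rfl fun a _ => by ring]
  rw [Finset.sum_sub_distrib]
  ring

section signs

variable (f : ℕ → ℝ) (σ : Fin N → ℝ) (i : Fin N) (t : ℕ)

lemma term_sign (hσ : ∀ j, σ j = 1 ∨ σ j = 0 ∨ σ j = 1/2)
    (hf : StrictAntiOn f (Set.Icc 1 N))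
    (h1 : (Finset.univ.filter fun j => σ j = 1).card = t)
    (h0 : (Finset.univ.filter fun j => σ j = 0).card = t)
    (δ : ℝ) (hδ : (σ i = 1 ∧ δ = 1) ∨ (σ i = 0 ∧ δ = -1) ∨ (σ i = 1/2 ∧ (δ = 1 ∨ δ = -1)))
    (a : Fin N → Bool) :
    0 ≤ δ * (w σ i a * (if a i then (1:ℝ) else -1) * (f (cnt i a) - f (cnt i (kap σ i a)))) := by
  by_cases hs : ∀ j, j ≠ i → (σ j = 1 → a j = true) ∧ (σ j = 0 → a j = false)
  · have hck := cnt_kap σ hσ i a hs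
    have hwn := w_nonneg σ hσ i a
    have hm1 : ∀ b : Fin N → Bool, cnt i b ∈ Set.Icc 1 N :=
      fun b => ⟨cnt_pos i b, cnt_le i b⟩
    -- compute the erase-cards according to the case
    rcases hδ with ⟨hsi, hδ⟩ | ⟨hsi, hδ⟩ | ⟨hsi, hδ⟩
    · -- σ i = 1 : cnt κ = cnt + ε
      have hiO : i ∈ univ.filter (fun j => σ j = 1) := by simp [hsi]
      have hiZ : i ∉ univ.filter (fun j => σ j = 0) := by simp [hsi]
      have ht1 : 1 ≤ t := by
        rw [← h1]; exact Finset.card_pos.mpr ⟨i, hiO⟩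
      have hOe : ((univ.filter fun j => σ j = 1).erase i).card = t - 1 := by
        rw [Finset.card_erase_of_mem hiO, h1]
      have hZe : ((univ.filter fun j => σ j = 0).erase i).card = t := by
        rw [Finset.erase_eq_of_notMem hiZ, h0]
      rw [hOe, hZe] at hck
      subst hδ
      cases hai : a i
      · rw [hai] at hck
        simp only [Bool.false_eq_true, if_false] at hck ⊢
        have hc : cnt i a = cnt i (kap σ i a) + 1 := by push_cast at hck; omega
        have hlt : f (cnt i a) < f (cnt i (kap σ i a)) :=
          hf (hm1 (kap σ i a)) (hm1 a) (by omega)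
        nlinarith
      · rw [hai] at hck
        simp only [if_true] at hck ⊢
        have hc : cnt i (kap σ i a) = cnt i a + 1 := by push_cast at hck; omega
        have hlt : f (cnt i (kap σ i a)) < f (cnt i a) :=
          hf (hm1 a) (hm1 (kap σ i a)) (by omega)
        nlinarith
    · -- σ i = 0
      have hiO : i ∉ univ.filter (fun j => σ j = 1) := by simp [hsi]
      have hiZ : i ∈ univ.filter (fun j => σ j = 0) := by simp [hsi]
      have ht1 : 1 ≤ t := by
        rw [← h0]; exact Finset.card_pos.mpr ⟨i, hiZ⟩
      have hOe : ((univ.filter fun j => σ j = 1).erase i).card = t := by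
        rw [Finset.erase_eq_of_notMem hiO, h1]
      have hZe : ((univ.filter fun j => σ j = 0).erase i).card = t - 1 := by
        rw [Finset.card_erase_of_mem hiZ, h0]
      rw [hOe, hZe] at hck
      subst hδ
      cases hai : a i
      · rw [hai] at hck
        simp only [Bool.false_eq_true, if_false] at hck ⊢
        have hc : cnt i (kap σ i a) = cnt i a + 1 := by push_cast at hck; omega
        have hlt : f (cnt i (kap σ i a)) < f (cnt i a) :=
          hf (hm1 a) (hm1 (kap σ i a)) (by omega)
        nlinarith
      · rw [hai] at hck
        simp only [if_true] at hck ⊢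
        have hc : cnt i a = cnt i (kap σ i a) + 1 := by push_cast at hck; omega
        have hlt : f (cnt i a) < f (cnt i (kap σ i a)) :=
          hf (hm1 (kap σ i a)) (hm1 a) (by omega)
        nlinarith
    · -- σ i = 1/2
      have hiO : i ∉ univ.filter (fun j => σ j = 1) := by
        simp only [mem_filter, mem_univ, true_and, hsi]; norm_num
      have hiZ : i ∉ univ.filter (fun j => σ j = 0) := by
        simp only [mem_filter, mem_univ, true_and, hsi]; norm_num
      have hOe : ((univ.filter fun j => σ j = 1).erase i).card = t := by
        rw [Finset.erase_eq_of_notMem hiO, h1]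
      have hZe : ((univ.filter fun j => σ j = 0).erase i).card = t := by
        rw [Finset.erase_eq_of_notMem hiZ, h0]
      rw [hOe, hZe] at hck
      have hc : cnt i (kap σ i a) = cnt i a := by
        cases hai : a i <;> rw [hai] at hck <;> push_cast at hck <;> omega
      rw [hc]
      simp
  · have hw0 : w σ i a = 0 := by
      by_contra hw
      apply hs
      intro j hji
      constructor
      · intro hs1
        by_contra hab
        have haj : a j = false := by cases h : a j <;> simp_all
        exact hw (w_eq_zero σ i a j hji (Or.inl ⟨hs1, haj⟩))
      · intro hs0
        by_contra hab
        have haj : a j = true := by cases h : a j <;> simp_all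
        exact hw (w_eq_zero σ i a j hji (Or.inr ⟨hs0, haj⟩))
    rw [hw0]
    simp

end signs


lemma Dsum_sign (f : ℕ → ℝ) (σ : Fin N → ℝ) (i : Fin N) (t : ℕ)
    (hσ : ∀ j, σ j = 1 ∨ σ j = 0 ∨ σ j = 1/2)
    (hf : StrictAntiOn f (Set.Icc 1 N))
    (h1 : (Finset.univ.filter fun j => σ j = 1).card = t)
    (h0 : (Finset.univ.filter fun j => σ j = 0).card = t)
    (δ : ℝ) (hδ : (σ i = 1 ∧ δ = 1) ∨ (σ i = 0 ∧ δ = -1) ∨ (σ i = 1/2 ∧ (δ = 1 ∨ δ = -1))) :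
    0 ≤ δ * Dsum f σ i := by
  have h := Finset.sum_nonneg (fun a (_ : a ∈ (univ : Finset (Fin N → Bool))) =>
    term_sign f σ i t hσ hf h1 h0 δ hδ a)
  rw [← Finset.mul_sum, ← two_Dsum] at h
  nlinarith [h]

lemma mgEPay_sub (f : ℕ → ℝ) (σ : Fin N → ℝ) (i : Fin N) (τ : ℝ) :
    mgEPay f (Function.update σ i τ) i - mgEPay f σ i = (τ - σ i) * Dsum f σ i := by
  unfold mgEPay Dsum mgProb cnt
  rw [← Finset.sum_sub_distrib, Finset.mul_sum]
  apply Finset.sum_congr rfl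
  intro a _
  have hsplit : ∀ p : Fin N → ℝ, (∏ j, if a j then p j else 1 - p j)
      = (if a i then p i else 1 - p i) * w p i a :=
    fun p => (Finset.mul_prod_erase univ _ (mem_univ i)).symm
  rw [hsplit, hsplit]
  have hw : w (Function.update σ i τ) i a = w σ i a :=
    Finset.prod_congr rfl fun j hj => by
      rw [Function.update_of_ne (Finset.mem_erase.mp hj).1]
  rw [hw, Function.update_self]
  cases a i <;> simp <;> ring

end Stmt12Aux

/-- For each t ∈ {0,...,k}, the profile where t players choose -1, t players
choose +1, and the remaining 2k+1-2t players mix uniformly is a Nash equilibrium. -/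
theorem stmt_12 (k t : ℕ) (ht : t ≤ k) (f : ℕ → ℝ)
    (hf : StrictAntiOn f (Set.Icc 1 (2 * k + 1)))
    (σ : Fin (2 * k + 1) → ℝ)
    (hσ : ∀ i, σ i = 1 ∨ σ i = 0 ∨ σ i = 1 / 2)
    (h1 : (Finset.univ.filter fun i => σ i = 1).card = t)
    (h0 : (Finset.univ.filter fun i => σ i = 0).card = t) :
    mgMixedNE f σ := by
  constructor
  · intro i
    rcases hσ i with h | h | h <;> rw [h] <;> norm_num
  · intro i τ hτ0 hτ1
    have hsub := Stmt12Aux.mgEPay_sub f σ i τ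
    have key : (τ - σ i) * Stmt12Aux.Dsum f σ i ≤ 0 := by
      rcases hσ i with h | h | h
      · have hD := Stmt12Aux.Dsum_sign f σ i t hσ hf h1 h0 1 (Or.inl ⟨h, rfl⟩)
        rw [h]
        nlinarith
      · have hD := Stmt12Aux.Dsum_sign f σ i t hσ hf h1 h0 (-1) (Or.inr (Or.inl ⟨h, rfl⟩))
        rw [h]
        nlinarith
      · have hD1 := Stmt12Aux.Dsum_sign f σ i t hσ hf h1 h0 1 (Or.inr (Or.inr ⟨h, Or.inl rfl⟩))
        have hD2 := Stmt12Aux.Dsum_sign f σ i t hσ hf h1 h0 (-1) (Or.inr (Or.inr ⟨h, Or.inr rfl⟩))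
        nlinarith
    linarith
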